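/- Let n = ℓ_1⋯ℓ_r be a square-free natural number with distinct prime factors ℓ_i, let K be a global field with gcd(char(K), n) = 1 containing a primitive nth root of unity, let α ∈ K*, and let M := K(α^{1/n}) be a cyclic extension of K of degree n with subfields L_i := K(α^{1/ℓ_i}). Then N_{M/K}(M*) = K* ∩ ∩_{i=1}^r N_{L_i/K}(L_i*); consequently, x ∈ K* is not a norm of M/K if and only if x is not a norm of L_i/K for some i. -/

import Mathlib

open scoped Classical
open IntermediateField

noncomputable section

/-- `K` is a global field: a number field, or a finite extension of a rational function
field `𝔽_q(t)` over a finite field (equivalently, `K` contains a finite subfield `F₀` and an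
element `x` transcendental over `F₀` such that `K` is finite over `F₀(x)`). -/
def IsGlobalField (K : Type*) [Field K] : Prop :=
  NumberField K ∨
    ∃ F₀ : Subfield K, Finite F₀ ∧ ∃ x : K, Transcendental F₀ x ∧
      FiniteDimensional (IntermediateField.adjoin F₀ {x}) K

/-- `A ⊆ K^ι` is a diophantine subset of `K^ι`: it is cut out by an existential
polynomial condition over `K`. -/
def IsDiophantine {K : Type*} [Field K] {ι : Type*} (A : Set (ι → K)) : Prop :=
  ∃ (m : ℕ) (f : MvPolynomial (Fin m ⊕ ι) K),
    A = {a | ∃ r : Fin m → K, MvPolynomial.eval (Sum.elim r a) f = 0}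

/-- `x` is a norm of the radical extension `F(y^{1/n})/F`, where `F(y^{1/n})` is realized
inside an algebraic closure of `F` (for `F` containing the `n`-th roots of unity this does
not depend on the choice of the root `z` of `X^n - y`). -/
def IsNormOfRadical (F : Type*) [Field F] (n : ℕ) (y x : F) : Prop :=
  ∀ z : AlgebraicClosure F, z ^ n = algebraMap F (AlgebraicClosure F) y →
    ∃ w : (IntermediateField.adjoin F {z} : IntermediateField F (AlgebraicClosure F)),
      Algebra.norm F w = x

open Module Polynomial

section Aux

variable {K Ω : Type*} [Field K] [Field Ω] [Algebra K Ω]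

lemma aux_restrict (β ρ : Ω) (hβ : β ∈ K⟮ρ⟯) :
    (IntermediateField.adjoin K⟮β⟯ {ρ}).restrictScalars K = K⟮ρ⟯ := by
  rw [adjoin_adjoin_left]
  apply le_antisymm
  · rw [adjoin_le_iff]
    rintro x (rfl | rfl)
    · exact hβ
    · exact mem_adjoin_simple_self K x
  · exact adjoin.mono _ _ _ Set.subset_union_right

lemma aux_norm_tower (β ρ : Ω) (hβ : β ∈ K⟮ρ⟯)
    [FiniteDimensional K K⟮ρ⟯] [Algebra.IsSeparable K K⟮ρ⟯] :
    ∃ m : ℕ, finrank K K⟮β⟯ * m = finrank K K⟮ρ⟯ ∧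
      (∀ w : K⟮ρ⟯, w ≠ 0 → ∃ u : K⟮β⟯, u ≠ 0 ∧ Algebra.norm K u = Algebra.norm K w) ∧
      (∀ u : K⟮β⟯, u ≠ 0 → ∃ w : K⟮ρ⟯, w ≠ 0 ∧
        Algebra.norm K w = (Algebra.norm K u) ^ m) := by
  set L := K⟮β⟯
  set F := IntermediateField.adjoin L {ρ}
  have hres : F.restrictScalars K = K⟮ρ⟯ := aux_restrict β ρ hβ
  let e : (F.restrictScalars K) ≃ₐ[K] K⟮ρ⟯ := equivOfEq hres
  let e' : F ≃ₐ[K] K⟮ρ⟯ := e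
  have hfd : FiniteDimensional K F := Module.Finite.equiv e'.symm.toLinearEquiv
  have hsep : Algebra.IsSeparable K F := AlgEquiv.Algebra.isSeparable e'.symm
  have hfdL : FiniteDimensional L F := FiniteDimensional.right K L F
  haveI : Module.Free L F := Module.Free.of_divisionRing L F
  have hrank : finrank K L * finrank L F = finrank K K⟮ρ⟯ := by
    rw [Module.finrank_mul_finrank K L F, e'.toLinearEquiv.finrank_eq]
  refine ⟨finrank L F, hrank, ?_, ?_⟩
  · intro w hw
    refine ⟨Algebra.norm L (e'.symm w), ?_, ?_⟩
    · rw [ne_eq, Algebra.norm_eq_zero_iff]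
      simpa using hw
    · rw [Algebra.norm_norm, ← Algebra.norm_eq_of_algEquiv e' (e'.symm w)]
      simp
  · intro u hu
    refine ⟨e' (algebraMap L F u), ?_, ?_⟩
    · simp only [ne_eq, _root_.map_eq_zero]
      exact fun h => hu (by simpa using h)
    · rw [Algebra.norm_eq_of_algEquiv e', ← Algebra.norm_norm (R := K) (S := L),
        Algebra.norm_algebraMap, map_pow]

end Aux

/-- Let `n = ℓ₁ ⋯ ℓᵣ` be square-free with distinct prime factors `ℓᵢ`,
`K` a global field with `gcd(char K, n) = 1` containing a primitive `n`-th root of unity,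
`α ∈ K^*`, and `M := K(α^{1/n})` a cyclic extension of degree `n`, with subfields
`Lᵢ := K(α^{1/ℓᵢ})`. Then `N_{M/K}(M^*) = K^* ∩ ⋂ᵢ N_{Lᵢ/K}(Lᵢ^*)`; consequently,
`x ∈ K^*` is not a norm of `M/K` iff it is not a norm of some `Lᵢ/K`. We realize `M` as
`K⟮ρ⟯` for a root `ρ` of `X^n - α` in an algebraic closure, and `Lᵢ = K⟮ρ^{n/ℓᵢ}⟯`. -/
theorem normGroup_of_compositum (K : Type*) [Field K] (hK : IsGlobalField K)
    (r : ℕ) (ℓ : Fin r → ℕ) (hp : ∀ i, (ℓ i).Prime) (hinj : Function.Injective ℓ)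
    (n : ℕ) (hn : n = ∏ i, ℓ i) (hchar : (n : K) ≠ 0)
    (μ : K) (hμ : IsPrimitiveRoot μ n)
    (α : K) (hα : α ≠ 0)
    (ρ : AlgebraicClosure K) (hρ : ρ ^ n = algebraMap K (AlgebraicClosure K) α)
    (hgal : IsGalois K K⟮ρ⟯) (hcyc : IsCyclic (K⟮ρ⟯ ≃ₐ[K] K⟮ρ⟯))
    (hdeg : Module.finrank K K⟮ρ⟯ = n) :
    ({x : K | ∃ w : K⟮ρ⟯, w ≠ 0 ∧ Algebra.norm K w = x} =
      {x : K | x ≠ 0} ∩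
        ⋂ i : Fin r, {x : K | ∃ w : K⟮ρ ^ (n / ℓ i)⟯, w ≠ 0 ∧ Algebra.norm K w = x}) ∧
    ∀ x : K, x ≠ 0 →
      ((¬ ∃ w : K⟮ρ⟯, w ≠ 0 ∧ Algebra.norm K w = x) ↔
        ∃ i : Fin r, ¬ ∃ w : K⟮ρ ^ (n / ℓ i)⟯, w ≠ 0 ∧ Algebra.norm K w = x) := by
  have hn0 : 0 < n := hn ▸ Finset.prod_pos (fun i _ => (hp i).pos)
  have hρint : IsIntegral K ρ := Algebra.IsIntegral.isIntegral ρ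
  haveI hfd : FiniteDimensional K K⟮ρ⟯ := FiniteDimensional.of_finrank_pos (hdeg ▸ hn0)
  haveI hsep : Algebra.IsSeparable K K⟮ρ⟯ := hgal.to_isSeparable
  have hmono : (X ^ n - C α).Monic := monic_X_pow_sub_C α hn0.ne'
  have hmin : X ^ n - C α = minpoly K ρ := by
    apply Polynomial.eq_of_monic_of_dvd_of_natDegree_le (minpoly.monic hρint) hmono
    · exact minpoly.dvd K ρ (by simp [hρ])
    · rw [natDegree_X_pow_sub_C, ← hdeg, IntermediateField.adjoin.finrank hρint]
  have hirr : Irreducible (X ^ n - C α) := hmin ▸ minpoly.irreducible hρint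
  have hβfacts : ∀ i : Fin r, (ρ ^ (n / ℓ i)) ∈ K⟮ρ⟯ ∧
      finrank K K⟮ρ ^ (n / ℓ i)⟯ = ℓ i := by
    intro i
    have hdvd : ℓ i ∣ n := hn ▸ Finset.dvd_prod_of_mem ℓ (Finset.mem_univ i)
    have hβpow : (ρ ^ (n / ℓ i)) ^ ℓ i = algebraMap K (AlgebraicClosure K) α := by
      rw [← pow_mul, Nat.div_mul_cancel hdvd, hρ]
    have hnotpow : ∀ b : K, b ^ ℓ i ≠ α :=
      pow_ne_of_irreducible_X_pow_sub_C hirr hdvd (hp i).ne_one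
    have hirr' : Irreducible (X ^ ℓ i - C α) :=
      X_pow_sub_C_irreducible_of_prime (hp i) hnotpow
    have hint : IsIntegral K (ρ ^ (n / ℓ i)) := Algebra.IsIntegral.isIntegral _
    have hminβ : minpoly K (ρ ^ (n / ℓ i)) = X ^ ℓ i - C α :=
      (minpoly.eq_of_irreducible_of_monic hirr'
        (by rw [map_sub, map_pow, aeval_X, aeval_C, hβpow, sub_self])
        (monic_X_pow_sub_C α (hp i).ne_zero)).symm
    exact ⟨pow_mem (mem_adjoin_simple_self K ρ) _, by
      rw [IntermediateField.adjoin.finrank hint, hminβ, natDegree_X_pow_sub_C]⟩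
  choose m hm hfwd hbwd using fun i : Fin r =>
    aux_norm_tower (ρ ^ (n / ℓ i)) ρ (hβfacts i).1
  have hm' : ∀ i, ℓ i * m i = n := fun i => by
    have h2 := hm i
    rw [(hβfacts i).2, hdeg] at h2
    exact h2
  -- main backward implication
  have main : ∀ x : K, x ≠ 0 →
      (∀ i, ∃ u : K⟮ρ ^ (n / ℓ i)⟯, u ≠ 0 ∧ Algebra.norm K u = x) →
      ∃ w : K⟮ρ⟯, w ≠ 0 ∧ Algebra.norm K w = x := by
    intro x hx hxall
    set xu : Kˣ := Units.mk0 x hx with hxu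
    let φ : K⟮ρ⟯ˣ →* Kˣ := Units.map (Algebra.norm K : K⟮ρ⟯ →* K)
    have key_pair : ∀ a b : ℕ, xu ^ (a : ℤ) ∈ φ.range → xu ^ (b : ℤ) ∈ φ.range →
        xu ^ ((Nat.gcd a b : ℕ) : ℤ) ∈ φ.range := by
      intro a b ha hb
      rw [show ((Nat.gcd a b : ℕ) : ℤ) = a * Nat.gcdA a b + b * Nat.gcdB a b from
        Nat.gcd_eq_gcd_ab a b, zpow_add, zpow_mul, zpow_mul]
      exact mul_mem (zpow_mem ha _) (zpow_mem hb _)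
    have hxn : xu ^ (n : ℤ) ∈ φ.range := by
      refine ⟨Units.mk0 (algebraMap K K⟮ρ⟯ x) (by simp [hx]), ?_⟩
      ext
      rw [zpow_natCast]
      simp [φ, Algebra.norm_algebraMap, hdeg, xu]
    have hxm : ∀ i, xu ^ ((m i : ℕ) : ℤ) ∈ φ.range := by
      intro i
      obtain ⟨u, hu0, hunorm⟩ := hxall i
      obtain ⟨w, hw0, hwnorm⟩ := hbwd i u hu0
      refine ⟨Units.mk0 w hw0, ?_⟩
      ext
      rw [zpow_natCast]
      simp [φ, hwnorm, hunorm, xu]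
    have hfold : ∀ s : Finset (Fin r),
        xu ^ ((Nat.gcd n (s.gcd m) : ℕ) : ℤ) ∈ φ.range := by
      intro s
      induction s using Finset.induction_on with
      | empty => simpa using hxn
      | @insert i s hnot ih =>
        rw [Finset.gcd_insert]
        have hgg : ∀ a b : ℕ, GCDMonoid.gcd a b = Nat.gcd a b := fun _ _ => rfl
        rw [hgg]
        have heq : Nat.gcd n (Nat.gcd (m i) (s.gcd m)) =
            Nat.gcd (m i) (Nat.gcd n (s.gcd m)) := by
          rw [← Nat.gcd_assoc, Nat.gcd_comm n (m i), Nat.gcd_assoc]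
        rw [heq]
        exact key_pair _ _ (hxm i) ih
    have hg1 : Nat.gcd n (Finset.univ.gcd m) = 1 := by
      by_contra hne
      obtain ⟨p, hpp, hpd⟩ := Nat.exists_prime_and_dvd hne
      have hpn : p ∣ ∏ i, ℓ i := hn ▸ hpd.trans (Nat.gcd_dvd_left _ _)
      obtain ⟨k, -, hk⟩ := hpp.prime.exists_mem_finset_dvd hpn
      have hpk : p = ℓ k := (Nat.prime_dvd_prime_iff_eq hpp (hp k)).mp hk
      have h1 : p ∣ m k :=
        (hpd.trans (Nat.gcd_dvd_right _ _)).trans (Finset.gcd_dvd (Finset.mem_univ k))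
      have hmk : m k = ∏ j ∈ Finset.univ.erase k, ℓ j := by
        have h2 : ℓ k * m k = ℓ k * ∏ j ∈ Finset.univ.erase k, ℓ j := by
          rw [hm' k, hn, Finset.mul_prod_erase _ _ (Finset.mem_univ k)]
        exact Nat.eq_of_mul_eq_mul_left (hp k).pos h2
      rw [hpk, hmk] at h1
      obtain ⟨j, hj, hjd⟩ := (hp k).prime.exists_mem_finset_dvd h1
      have heq : ℓ k = ℓ j := (Nat.prime_dvd_prime_iff_eq (hp k) (hp j)).mp hjd
      exact (Finset.mem_erase.mp hj).1 ((hinj heq).symm)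
    have hfin := hfold Finset.univ
    rw [hg1] at hfin
    obtain ⟨W, hW⟩ := hfin
    refine ⟨(W : K⟮ρ⟯), W.ne_zero, ?_⟩
    have := congrArg Units.val hW
    simpa [φ, xu] using this
  constructor
  · ext x
    simp only [Set.mem_setOf_eq, Set.mem_inter_iff, Set.mem_iInter]
    constructor
    · rintro ⟨w, hw0, rfl⟩
      refine ⟨by rw [ne_eq, Algebra.norm_eq_zero_iff]; exact hw0, fun i => ?_⟩
      obtain ⟨u, hu0, hu⟩ := hfwd i w hw0
      exact ⟨u, hu0, hu⟩
    · rintro ⟨hx, hxi⟩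
      exact main x hx hxi
  · intro x hx
    constructor
    · intro hnot
      by_contra hc
      push_neg at hc
      exact hnot (main x hx hc)
    · rintro ⟨i, hni⟩ ⟨w, hw0, hwx⟩
      obtain ⟨u, hu0, hu⟩ := hfwd i w hw0
      exact hni ⟨u, hu0, hu.trans hwx⟩
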